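/- The assignment R_i ↦ g_0 g_i and R'_i ↦ g_i g_0^{−1} (i = 0,…,n−1) extends to a group isomorphism from the presented group B onto the alternating subgroup 𝓑⁺ of the braid group 𝓑 of the Coxeter matrix m. -/

import Mathlib

/-- `altProd a b k` is the alternating product `a * b * a * b * ⋯` with `k` factors. -/
def altProd {M : Type*} [Monoid M] (a b : M) : ℕ → M
  | 0 => 1
  | k + 1 => a * altProd b a k

lemma map_altProd {M N : Type*} [Monoid M] [Monoid N] (f : M →* N) (a b : M) :
    ∀ k, f (altProd a b k) = altProd (f a) (f b) k
  | 0 => by simp [altProd]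
  | k + 1 => by simp [altProd, map_mul, map_altProd f b a k]

lemma altProd_self {M : Type*} [Monoid M] (a : M) : ∀ k, altProd a a k = a ^ k
  | 0 => by simp [altProd]
  | k + 1 => by rw [altProd, altProd_self a k, ← pow_succ']

section Braid
variable {n : ℕ}

/-- The braid relations of a Coxeter matrix (entry `0` encodes `∞`, and the
corresponding relation is omitted). -/
def braidRels (M : CoxeterMatrix (Fin n)) : Set (FreeGroup (Fin n)) :=
  { x | ∃ i j : Fin n, i < j ∧ M i j ≠ 0 ∧
      x = altProd (FreeGroup.of i) (FreeGroup.of j) (M i j) *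
        (altProd (FreeGroup.of j) (FreeGroup.of i) (M i j))⁻¹ }

/-- The braid group of a Coxeter matrix. -/
def BraidGroup (M : CoxeterMatrix (Fin n)) : Type _ := PresentedGroup (braidRels M)

instance (M : CoxeterMatrix (Fin n)) : Group (BraidGroup M) :=
  inferInstanceAs (Group (PresentedGroup (braidRels M)))

/-- The generators `g i` of the braid group. -/
def braidGen (M : CoxeterMatrix (Fin n)) (i : Fin n) : BraidGroup M := PresentedGroup.of i

/-- The sign character of the braid group, sending each generator to `-1`. -/
def braidSign (M : CoxeterMatrix (Fin n)) : BraidGroup M →* ℤˣ :=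
  PresentedGroup.toGroup (f := fun _ : Fin n => (-1 : ℤˣ)) (by
    rintro x ⟨i, j, hij, hm, rfl⟩
    simp [map_altProd, altProd_self])

/-- The alternating subgroup of the braid group: the kernel of the sign character. -/
def braidAlt (M : CoxeterMatrix (Fin n)) : Subgroup (BraidGroup M) := (braidSign M).ker

/-- The defining relations of the presented group `B`, with generators
`R_i = Sum.inl i` and `R'_i = Sum.inr i`:  `R'_0 = 1`;
`⟨R'_i,R_j⟩_{m_{ij}} = ⟨R'_j,R_i⟩_{m_{ij}}` and `⟨R_i,R'_j⟩_{m_{ij}} = ⟨R_j,R'_i⟩_{m_{ij}}`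
for `i < j` with `m_{ij}` finite. -/
def bourbakiRels (M : CoxeterMatrix (Fin n)) (hn : 0 < n) :
    Set (FreeGroup (Fin n ⊕ Fin n)) :=
  { x | x = FreeGroup.of (Sum.inr (⟨0, hn⟩ : Fin n)) ∨
      (∃ i j : Fin n, i < j ∧ M i j ≠ 0 ∧
        x = altProd (FreeGroup.of (Sum.inr i)) (FreeGroup.of (Sum.inl j)) (M i j) *
          (altProd (FreeGroup.of (Sum.inr j)) (FreeGroup.of (Sum.inl i)) (M i j))⁻¹) ∨
      (∃ i j : Fin n, i < j ∧ M i j ≠ 0 ∧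
        x = altProd (FreeGroup.of (Sum.inl i)) (FreeGroup.of (Sum.inr j)) (M i j) *
          (altProd (FreeGroup.of (Sum.inl j)) (FreeGroup.of (Sum.inr i)) (M i j))⁻¹) }

namespace BourbakiAux

lemma mk_rel {α : Type*} {rels : Set (FreeGroup α)} {r : FreeGroup α} (h : r ∈ rels) :
    PresentedGroup.mk rels r = 1 :=
  (QuotientGroup.eq_one_iff _).mpr (Subgroup.subset_normalClosure h)

variable {n : ℕ} (M : CoxeterMatrix (Fin n)) (hn : 0 < n)

lemma braid_rel {i j : Fin n} (hij : i < j) (hm : M i j ≠ 0) :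
    altProd (braidGen M i) (braidGen M j) (M i j)
      = altProd (braidGen M j) (braidGen M i) (M i j) := by
  have h := mk_rel (rels := braidRels M) ⟨i, j, hij, hm, rfl⟩
  have h2 : (PresentedGroup.mk (braidRels M))
        (altProd (FreeGroup.of i) (FreeGroup.of j) (M i j) *
          (altProd (FreeGroup.of j) (FreeGroup.of i) (M i j))⁻¹) = 1 := h
  rw [map_mul, map_inv, map_altProd, map_altProd, mul_inv_eq_one] at h2
  exact h2

abbrev BB := PresentedGroup (bourbakiRels M hn)

def Rg (i : Fin n) : BB M hn := PresentedGroup.of (Sum.inl i)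
def Rg' (i : Fin n) : BB M hn := PresentedGroup.of (Sum.inr i)

lemma Rg'_zero : Rg' M hn ⟨0, hn⟩ = 1 :=
  mk_rel (rels := bourbakiRels M hn) (Or.inl rfl)

lemma bRel1 {i j : Fin n} (hij : i < j) (hm : M i j ≠ 0) :
    altProd (Rg' M hn i) (Rg M hn j) (M i j) = altProd (Rg' M hn j) (Rg M hn i) (M i j) := by
  have h := mk_rel (rels := bourbakiRels M hn) (Or.inr (Or.inl ⟨i, j, hij, hm, rfl⟩))
  rw [map_mul, map_inv, map_altProd, map_altProd, mul_inv_eq_one] at h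
  exact h

lemma bRel2 {i j : Fin n} (hij : i < j) (hm : M i j ≠ 0) :
    altProd (Rg M hn i) (Rg' M hn j) (M i j) = altProd (Rg M hn j) (Rg' M hn i) (M i j) := by
  have h := mk_rel (rels := bourbakiRels M hn) (Or.inr (Or.inr ⟨i, j, hij, hm, rfl⟩))
  rw [map_mul, map_inv, map_altProd, map_altProd, mul_inv_eq_one] at h
  exact h

end BourbakiAux

section AltLemmas
variable {G : Type*} [Group G]

lemma altA (g u v : G) : ∀ k,
    altProd (u * g⁻¹) (g * v) k = altProd u v k * (if Even k then 1 else g⁻¹)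
    ∧ altProd (g * v) (u * g⁻¹) k = g * altProd v u k * (if Even k then g⁻¹ else 1)
  | 0 => by simp [altProd]
  | k + 1 => by
    obtain ⟨h1, h2⟩ := altA g u v k
    rcases Nat.even_or_odd k with hk | hk
    · have hk' : ¬ Even (k+1) := by simp [Nat.even_add_one, hk]
      constructor <;> simp only [altProd, h1, h2, if_pos hk, if_neg hk'] <;> group
    · have hk0 : ¬ Even k := Nat.not_even_iff_odd.mpr hk
      have hk' : Even (k+1) := Nat.even_add_one.mpr hk0
      constructor <;> simp only [altProd, h1, h2, if_neg hk0, if_pos hk'] <;> group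

lemma altB (g u v : G) : ∀ k,
    altProd (g⁻¹ * u) (v * g) k = g⁻¹ * altProd u v k * (if Even k then g else 1)
    ∧ altProd (v * g) (g⁻¹ * u) k = altProd v u k * (if Even k then 1 else g)
  | 0 => by simp [altProd]
  | k + 1 => by
    obtain ⟨h1, h2⟩ := altB g u v k
    rcases Nat.even_or_odd k with hk | hk
    · have hk' : ¬ Even (k+1) := by simp [Nat.even_add_one, hk]
      constructor <;> simp only [altProd, h1, h2, if_pos hk, if_neg hk'] <;> group
    · have hk0 : ¬ Even k := Nat.not_even_iff_odd.mpr hk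
      have hk' : Even (k+1) := Nat.even_add_one.mpr hk0
      constructor <;> simp only [altProd, h1, h2, if_neg hk0, if_pos hk'] <;> group
end AltLemmas

namespace BourbakiAux
variable {n : ℕ} (M : CoxeterMatrix (Fin n)) (hn : 0 < n)

/-- the map `R_i ↦ g_0 g_i`, `R'_i ↦ g_i g_0⁻¹`. -/
def phi : BB M hn →* BraidGroup M :=
  PresentedGroup.toGroup
    (f := Sum.elim (fun i => braidGen M ⟨0, hn⟩ * braidGen M i)
      (fun i => braidGen M i * (braidGen M ⟨0, hn⟩)⁻¹))
    (by
      rintro x (rfl | ⟨i, j, hij, hm, rfl⟩ | ⟨i, j, hij, hm, rfl⟩)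
      · simp
      · simp only [map_mul, map_inv, map_altProd, FreeGroup.lift_apply_of, Sum.elim_inl, Sum.elim_inr,
          mul_inv_eq_one]
        rw [(altA (braidGen M ⟨0, hn⟩) (braidGen M i) (braidGen M j)  (M i j)).1,
          (altA (braidGen M ⟨0, hn⟩) (braidGen M j) (braidGen M i) (M i j)).1,
          braid_rel M hij hm]
      · simp only [map_mul, map_inv, map_altProd, FreeGroup.lift_apply_of, Sum.elim_inl, Sum.elim_inr,
          mul_inv_eq_one]
        rw [(altA (braidGen M ⟨0, hn⟩) (braidGen M j) (braidGen M i) (M i j)).2,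
          (altA (braidGen M ⟨0, hn⟩) (braidGen M i) (braidGen M j) (M i j)).2,
          braid_rel M hij hm])

@[simp] lemma phi_Rg (i : Fin n) : phi M hn (Rg M hn i) = braidGen M ⟨0, hn⟩ * braidGen M i :=
  PresentedGroup.toGroup.of _

@[simp] lemma phi_Rg' (i : Fin n) :
    phi M hn (Rg' M hn i) = braidGen M i * (braidGen M ⟨0, hn⟩)⁻¹ :=
  PresentedGroup.toGroup.of _

end BourbakiAux

namespace BourbakiAux
variable {n : ℕ} (M : CoxeterMatrix (Fin n)) (hn : 0 < n)

/-- the endomorphism `σ : R_i ↦ R_0 R'_i, R'_i ↦ R_i R_0⁻¹` (conjugation by `g_0`). -/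
def sigma : BB M hn →* BB M hn :=
  PresentedGroup.toGroup
    (f := Sum.elim (fun i => Rg M hn ⟨0, hn⟩ * Rg' M hn i)
      (fun i => Rg M hn i * (Rg M hn ⟨0, hn⟩)⁻¹))
    (by
      rintro x (rfl | ⟨i, j, hij, hm, rfl⟩ | ⟨i, j, hij, hm, rfl⟩)
      · simp
      · simp only [map_mul, map_inv, map_altProd, FreeGroup.lift_apply_of, Sum.elim_inl, Sum.elim_inr,
          mul_inv_eq_one]
        rw [(altA (Rg M hn ⟨0, hn⟩) (Rg M hn i) (Rg' M hn j) (M i j)).1,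
          (altA (Rg M hn ⟨0, hn⟩) (Rg M hn j) (Rg' M hn i) (M i j)).1,
          bRel2 M hn hij hm]
      · simp only [map_mul, map_inv, map_altProd, FreeGroup.lift_apply_of, Sum.elim_inl, Sum.elim_inr,
          mul_inv_eq_one]
        rw [(altA (Rg M hn ⟨0, hn⟩) (Rg M hn j) (Rg' M hn i) (M i j)).2,
          (altA (Rg M hn ⟨0, hn⟩) (Rg M hn i) (Rg' M hn j) (M i j)).2,
          bRel1 M hn hij hm])

/-- the endomorphism `τ : R_i ↦ R'_i R_0, R'_i ↦ R_0⁻¹ R_i`, inverse to `σ`. -/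
def tau : BB M hn →* BB M hn :=
  PresentedGroup.toGroup
    (f := Sum.elim (fun i => Rg' M hn i * Rg M hn ⟨0, hn⟩)
      (fun i => (Rg M hn ⟨0, hn⟩)⁻¹ * Rg M hn i))
    (by
      rintro x (rfl | ⟨i, j, hij, hm, rfl⟩ | ⟨i, j, hij, hm, rfl⟩)
      · simp
      · simp only [map_mul, map_inv, map_altProd, FreeGroup.lift_apply_of, Sum.elim_inl, Sum.elim_inr,
          mul_inv_eq_one]
        rw [(altB (Rg M hn ⟨0, hn⟩) (Rg M hn i) (Rg' M hn j) (M i j)).1,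
          (altB (Rg M hn ⟨0, hn⟩) (Rg M hn j) (Rg' M hn i) (M i j)).1,
          bRel2 M hn hij hm]
      · simp only [map_mul, map_inv, map_altProd, FreeGroup.lift_apply_of, Sum.elim_inl, Sum.elim_inr,
          mul_inv_eq_one]
        rw [(altB (Rg M hn ⟨0, hn⟩) (Rg M hn j) (Rg' M hn i) (M i j)).2,
          (altB (Rg M hn ⟨0, hn⟩) (Rg M hn i) (Rg' M hn j) (M i j)).2,
          bRel1 M hn hij hm])

@[simp] lemma sigma_Rg (i : Fin n) :
    sigma M hn (Rg M hn i) = Rg M hn ⟨0, hn⟩ * Rg' M hn i := PresentedGroup.toGroup.of _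
@[simp] lemma sigma_Rg' (i : Fin n) :
    sigma M hn (Rg' M hn i) = Rg M hn i * (Rg M hn ⟨0, hn⟩)⁻¹ := PresentedGroup.toGroup.of _
@[simp] lemma tau_Rg (i : Fin n) :
    tau M hn (Rg M hn i) = Rg' M hn i * Rg M hn ⟨0, hn⟩ := PresentedGroup.toGroup.of _
@[simp] lemma tau_Rg' (i : Fin n) :
    tau M hn (Rg' M hn i) = (Rg M hn ⟨0, hn⟩)⁻¹ * Rg M hn i := PresentedGroup.toGroup.of _

lemma sigma_R0 : sigma M hn (Rg M hn ⟨0, hn⟩) = Rg M hn ⟨0, hn⟩ := by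
  simp [Rg'_zero]

lemma tau_R0 : tau M hn (Rg M hn ⟨0, hn⟩) = Rg M hn ⟨0, hn⟩ := by
  simp [Rg'_zero]

lemma tau_comp_sigma : (tau M hn).comp (sigma M hn) = MonoidHom.id _ := by
  ext x
  rcases x with i | i
  · show tau M hn (sigma M hn (Rg M hn i)) = Rg M hn i
    rw [sigma_Rg, map_mul, tau_R0, tau_Rg']
    group
  · show tau M hn (sigma M hn (Rg' M hn i)) = Rg' M hn i
    rw [sigma_Rg', map_mul, map_inv, tau_R0, tau_Rg]
    group

lemma sigma_comp_tau : (sigma M hn).comp (tau M hn) = MonoidHom.id _ := by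
  ext x
  rcases x with i | i
  · show sigma M hn (tau M hn (Rg M hn i)) = Rg M hn i
    rw [tau_Rg, map_mul, sigma_R0, sigma_Rg']
    group
  · show sigma M hn (tau M hn (Rg' M hn i)) = Rg' M hn i
    rw [tau_Rg', map_mul, map_inv, sigma_R0, sigma_Rg]
    group

/-- `σ` as an automorphism of `B`. -/
def sigmaE : BB M hn ≃* BB M hn :=
  MonoidHom.toMulEquiv (sigma M hn) (tau M hn) (tau_comp_sigma M hn) (sigma_comp_tau M hn)

lemma sigma_sigma (b : BB M hn) :
    sigma M hn (sigma M hn b) = Rg M hn ⟨0, hn⟩ * b * (Rg M hn ⟨0, hn⟩)⁻¹ := by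
  have : (sigma M hn).comp (sigma M hn)
      = (MulAut.conj (Rg M hn ⟨0, hn⟩)).toMonoidHom.comp (MonoidHom.id _) := by
    ext x
    rcases x with i | i
    · show sigma M hn (sigma M hn (Rg M hn i)) = _
      rw [sigma_Rg, map_mul, sigma_R0, sigma_Rg']
      simp [MulAut.conj_apply, Rg, mul_assoc]
    · show sigma M hn (sigma M hn (Rg' M hn i)) = _
      rw [sigma_Rg', map_mul, map_inv, sigma_R0, sigma_Rg]
      simp [MulAut.conj_apply, Rg', mul_assoc]
  have h := DFunLike.congr_fun this b
  simpa [MulAut.conj_apply] using h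

end BourbakiAux

def twf {N : Type*} [Monoid N] (f : N → N) : ℕ → N → N → N
  | 0, _, _ => 1
  | k + 1, a, b => a * f (twf f k b a)

lemma altProd_pair {N G : Type*} [Group N] [Group G] (φ : G →* MulAut N) (r : G) :
    ∀ (k : ℕ) (a b : N),
      altProd (⟨a, r⟩ : N ⋊[φ] G) ⟨b, r⟩ k = ⟨twf (⇑(φ r)) k a b, r ^ k⟩
  | 0, a, b => by
    show (1 : N ⋊[φ] G) = _
    ext <;> simp [twf]
  | k + 1, a, b => by
    rw [altProd, altProd_pair φ r k b a, SemidirectProduct.mul_def, ← pow_succ']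
    rfl

namespace BourbakiAux
variable {n : ℕ} (M : CoxeterMatrix (Fin n)) (hn : 0 < n)

lemma twf_sigma : ∀ (k : ℕ) (i j : Fin n),
    twf (⇑(sigma M hn)) k (Rg' M hn i) (Rg' M hn j)
      = altProd (Rg' M hn i) (Rg M hn j) k * ((Rg M hn ⟨0, hn⟩) ^ (k / 2))⁻¹
  | 0, i, j => by simp [twf, altProd]
  | k + 1, i, j => by
    rw [twf, twf_sigma k j i, map_mul, map_inv, map_pow, sigma_R0, map_altProd,
      sigma_Rg', sigma_Rg,
      (altA (Rg M hn ⟨0, hn⟩) (Rg M hn j) (Rg' M hn i) k).1]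
    show Rg' M hn i * (altProd (Rg M hn j) (Rg' M hn i) k * _ * _) = _
    rw [show altProd (Rg' M hn i) (Rg M hn j) (k+1)
        = Rg' M hn i * altProd (Rg M hn j) (Rg' M hn i) k from rfl]
    rcases Nat.even_or_odd k with hk | hk
    · have h2 : k % 2 = 0 := Nat.even_iff.mp hk
      rw [if_pos hk, show (k+1)/2 = k/2 by omega]
      group
    · have h2 : k % 2 = 1 := Nat.odd_iff.mp hk
      rw [if_neg (Nat.not_even_iff_odd.mpr hk), show (k+1)/2 = k/2 + 1 by omega,
        pow_succ, mul_inv_rev]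
      group

/-- the action of `ℤ` on `B` through `σ`. -/
def alphaH : Multiplicative ℤ →* MulAut (BB M hn) := zpowersHom _ (sigmaE M hn)

/-- the extension `E = B ⋊ ℤ`. -/
abbrev EE := (BB M hn) ⋊[alphaH M hn] Multiplicative ℤ

lemma alpha_t : ⇑(alphaH M hn (Multiplicative.ofAdd 1)) = ⇑(sigma M hn) := by
  show ⇑((sigmaE M hn) ^ ((1 : ℤ))) = _
  rw [zpow_one]
  rfl

lemma alpha_fix_R0 (s : Multiplicative ℤ) :
    alphaH M hn s (Rg M hn ⟨0, hn⟩) = Rg M hn ⟨0, hn⟩ := by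
  show (sigmaE M hn ^ (Multiplicative.toAdd s)) (Rg M hn ⟨0, hn⟩) = _
  induction Multiplicative.toAdd s using Int.induction_on with
  | zero => rfl
  | succ m ih =>
    rw [zpow_add_one, MulAut.mul_apply]
    have h0 : (sigmaE M hn) (Rg M hn ⟨0, hn⟩) = Rg M hn ⟨0, hn⟩ := sigma_R0 M hn
    rw [h0, ih]
  | pred m ih =>
    rw [zpow_sub_one, MulAut.mul_apply]
    have : (sigmaE M hn)⁻¹ (Rg M hn ⟨0, hn⟩) = Rg M hn ⟨0, hn⟩ := tau_R0 M hn
    rw [this, ih]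

lemma alpha_sq (b : BB M hn) :
    alphaH M hn (Multiplicative.ofAdd 2) b
      = Rg M hn ⟨0, hn⟩ * b * (Rg M hn ⟨0, hn⟩)⁻¹ := by
  show (sigmaE M hn ^ ((2 : ℤ))) b = _
  rw [show (2 : ℤ) = 1 + 1 by norm_num, zpow_add, zpow_one, MulAut.mul_apply]
  exact sigma_sigma M hn _

end BourbakiAux

namespace BourbakiAux
variable {n : ℕ} (M : CoxeterMatrix (Fin n)) (hn : 0 < n)

/-- the homomorphism `ψ : 𝓑 → E`, `g_i ↦ (R'_i, t)`. -/
def psi : BraidGroup M →* EE M hn :=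
  PresentedGroup.toGroup
    (f := fun i => (⟨Rg' M hn i, Multiplicative.ofAdd 1⟩ : EE M hn))
    (by
      rintro x ⟨i, j, hij, hm, rfl⟩
      simp only [map_mul, map_inv, map_altProd, FreeGroup.lift_apply_of, mul_inv_eq_one]
      rw [altProd_pair, altProd_pair, alpha_t, twf_sigma, twf_sigma, bRel1 M hn hij hm])

@[simp] lemma psi_gen (i : Fin n) :
    psi M hn (braidGen M i) = (⟨Rg' M hn i, Multiplicative.ofAdd 1⟩ : EE M hn) :=
  PresentedGroup.toGroup.of _

/-- the central element `z = (R_0⁻¹, t²)` of `E`. -/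
def zc : EE M hn := ⟨(Rg M hn ⟨0, hn⟩)⁻¹, Multiplicative.ofAdd 2⟩

lemma zc_comm (x : EE M hn) : Commute x (zc M hn) := by
  rcases x with ⟨b, s⟩
  show (⟨b, s⟩ : EE M hn) * ⟨(Rg M hn ⟨0, hn⟩)⁻¹, Multiplicative.ofAdd 2⟩
    = ⟨(Rg M hn ⟨0, hn⟩)⁻¹, Multiplicative.ofAdd 2⟩ * ⟨b, s⟩
  rw [SemidirectProduct.mul_def, SemidirectProduct.mul_def]
  ext
  · show b * (alphaH M hn s) (Rg M hn ⟨0, hn⟩)⁻¹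
      = (Rg M hn ⟨0, hn⟩)⁻¹ * (alphaH M hn (Multiplicative.ofAdd 2)) b
    rw [map_inv, alpha_fix_R0, alpha_sq]
    group
  · show s * Multiplicative.ofAdd 2 = Multiplicative.ofAdd 2 * s
    exact mul_comm _ _

/-- the degree character `d : B → ℤ`, `R_i ↦ 1`, `R'_i ↦ 0`. -/
def dh : BB M hn →* Multiplicative ℤ :=
  PresentedGroup.toGroup
    (f := Sum.elim (fun _ => Multiplicative.ofAdd 1) (fun _ => 1))
    (by
      rintro x (rfl | ⟨i, j, hij, hm, rfl⟩ | ⟨i, j, hij, hm, rfl⟩) <;>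
        simp [map_altProd])

@[simp] lemma dh_Rg (i : Fin n) : dh M hn (Rg M hn i) = Multiplicative.ofAdd 1 :=
  PresentedGroup.toGroup.of _
@[simp] lemma dh_Rg' (i : Fin n) : dh M hn (Rg' M hn i) = 1 :=
  PresentedGroup.toGroup.of _

/-- the homomorphism `b ↦ (b,0) z^{d(b)}` from `B` to `E`. -/
def theta' : BB M hn →* EE M hn where
  toFun b := SemidirectProduct.inl b * (zc M hn) ^ (Multiplicative.toAdd (dh M hn b))
  map_one' := by simp
  map_mul' a b := by
    simp only [map_mul, toAdd_mul, zpow_add]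
    have hcomm : Commute (SemidirectProduct.inl b : EE M hn)
        ((zc M hn) ^ (Multiplicative.toAdd (dh M hn a))) :=
      (zc_comm M hn _).zpow_right _
    rw [hcomm.mul_mul_mul_comm]

lemma theta_eq : (psi M hn).comp (phi M hn) = theta' M hn := by
  refine PresentedGroup.ext fun x => ?_
  rcases x with i | i
  · show psi M hn (phi M hn (Rg M hn i)) = theta' M hn (Rg M hn i)
    have hR : theta' M hn (Rg M hn i)
        = (⟨Rg M hn i * (Rg M hn ⟨0, hn⟩)⁻¹, Multiplicative.ofAdd 2⟩ : EE M hn) := by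
      show SemidirectProduct.inl (Rg M hn i)
          * (zc M hn) ^ (Multiplicative.toAdd (dh M hn (Rg M hn i))) = _
      rw [dh_Rg]
      show SemidirectProduct.inl (Rg M hn i) * (zc M hn) ^ (1 : ℤ) = _
      rw [zpow_one]
      show (⟨Rg M hn i, 1⟩ : EE M hn) * ⟨(Rg M hn ⟨0, hn⟩)⁻¹, Multiplicative.ofAdd 2⟩ = _
      rw [SemidirectProduct.mul_def]
      ext
      · show Rg M hn i * (alphaH M hn 1) (Rg M hn ⟨0, hn⟩)⁻¹ = Rg M hn i * (Rg M hn ⟨0, hn⟩)⁻¹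
        rw [map_one]
        rfl
      · show (1 : Multiplicative ℤ) * Multiplicative.ofAdd 2 = Multiplicative.ofAdd 2
        exact one_mul _
    have hL : psi M hn (phi M hn (Rg M hn i))
        = (⟨Rg M hn i * (Rg M hn ⟨0, hn⟩)⁻¹, Multiplicative.ofAdd 2⟩ : EE M hn) := by
      rw [phi_Rg, map_mul, psi_gen, psi_gen, SemidirectProduct.mul_def]
      ext
      · show Rg' M hn ⟨0, hn⟩ * (alphaH M hn (Multiplicative.ofAdd 1)) (Rg' M hn i)
          = Rg M hn i * (Rg M hn ⟨0, hn⟩)⁻¹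
        rw [Rg'_zero, one_mul, congrFun (alpha_t M hn) (Rg' M hn i), sigma_Rg']
      · show Multiplicative.toAdd (Multiplicative.ofAdd (1 : ℤ) * Multiplicative.ofAdd 1)
          = Multiplicative.toAdd (Multiplicative.ofAdd (2 : ℤ))
        decide
    rw [hL, hR]
  · show psi M hn (phi M hn (Rg' M hn i)) = theta' M hn (Rg' M hn i)
    have hR : theta' M hn (Rg' M hn i) = SemidirectProduct.inl (Rg' M hn i) := by
      show SemidirectProduct.inl (Rg' M hn i)
          * (zc M hn) ^ (Multiplicative.toAdd (dh M hn (Rg' M hn i))) = _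
      rw [dh_Rg']
      show SemidirectProduct.inl (Rg' M hn i) * (zc M hn) ^ (0 : ℤ) = _
      rw [zpow_zero, mul_one]
    have hL : psi M hn (phi M hn (Rg' M hn i)) = SemidirectProduct.inl (Rg' M hn i) := by
      rw [phi_Rg', map_mul, map_inv, psi_gen, psi_gen,
        SemidirectProduct.mk_eq_inl_mul_inr, SemidirectProduct.mk_eq_inl_mul_inr,
        Rg'_zero]
      simp
    rw [hL, hR]

end BourbakiAux

namespace BourbakiAux
variable {n : ℕ} (M : CoxeterMatrix (Fin n)) (hn : 0 < n)

lemma phi_injective : Function.Injective (phi M hn) := by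
  rw [injective_iff_map_eq_one]
  intro b hb
  have h1 : theta' M hn b = 1 := by
    have : psi M hn (phi M hn b) = ((psi M hn).comp (phi M hn)) b := rfl
    rw [theta_eq] at this
    rw [← this, hb, map_one]
  have h1' : (SemidirectProduct.inl b : EE M hn)
      * (zc M hn) ^ (Multiplicative.toAdd (dh M hn b)) = 1 := h1
  have h3 : (Multiplicative.ofAdd (2:ℤ)) ^ (Multiplicative.toAdd (dh M hn b)) = 1 := by
    have h2 := congrArg SemidirectProduct.rightHom h1'
    rw [map_mul, SemidirectProduct.rightHom_inl, one_mul, map_zpow, map_one] at h2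
    exact h2
  have hm : Multiplicative.toAdd (dh M hn b) = 0 := by
    have h4 := congrArg Multiplicative.toAdd h3
    rw [toAdd_zpow, toAdd_ofAdd, toAdd_one, smul_eq_mul] at h4
    omega
  rw [hm, zpow_zero, mul_one] at h1'
  have : (SemidirectProduct.inl b : EE M hn) = SemidirectProduct.inl (1 : BB M hn) := by
    rw [map_one]; exact h1'
  exact SemidirectProduct.inl_injective this

lemma sign_gen (i : Fin n) : braidSign M (braidGen M i) = -1 := PresentedGroup.toGroup.of _

lemma sign_phi (b : BB M hn) : braidSign M (phi M hn b) = 1 := by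
  have h : (braidSign M).comp (phi M hn) = 1 := by
    refine PresentedGroup.ext fun x => ?_
    rcases x with i | i
    · show braidSign M (phi M hn (Rg M hn i)) = 1
      rw [phi_Rg, map_mul, sign_gen, sign_gen]
      decide
    · show braidSign M (phi M hn (Rg' M hn i)) = 1
      rw [phi_Rg', map_mul, map_inv, sign_gen, sign_gen]
      decide
  have : braidSign M (phi M hn b) = ((braidSign M).comp (phi M hn)) b := rfl
  rw [this, h]
  rfl

lemma phi_sigma (b : BB M hn) :
    phi M hn (sigma M hn b)
      = braidGen M ⟨0, hn⟩ * phi M hn b * (braidGen M ⟨0, hn⟩)⁻¹ := by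
  have h : (phi M hn).comp (sigma M hn)
      = (MulAut.conj (braidGen M ⟨0, hn⟩)).toMonoidHom.comp (phi M hn) := by
    refine PresentedGroup.ext fun x => ?_
    rcases x with i | i
    · show phi M hn (sigma M hn (Rg M hn i)) = MulAut.conj (braidGen M ⟨0, hn⟩) (phi M hn (Rg M hn i))
      simp only [MulAut.conj_apply, sigma_Rg, map_mul, map_inv, phi_Rg, phi_Rg']
      group
    · show phi M hn (sigma M hn (Rg' M hn i)) = MulAut.conj (braidGen M ⟨0, hn⟩) (phi M hn (Rg' M hn i))
      simp only [MulAut.conj_apply, sigma_Rg', map_mul, map_inv, phi_Rg, phi_Rg']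
      group
  have h2 := DFunLike.congr_fun h b
  simpa [MulAut.conj_apply] using h2

lemma phi_tau (b : BB M hn) :
    phi M hn (tau M hn b)
      = (braidGen M ⟨0, hn⟩)⁻¹ * phi M hn b * braidGen M ⟨0, hn⟩ := by
  have h : (phi M hn).comp (tau M hn)
      = (MulAut.conj ((braidGen M ⟨0, hn⟩)⁻¹)).toMonoidHom.comp (phi M hn) := by
    refine PresentedGroup.ext fun x => ?_
    rcases x with i | i
    · show phi M hn (tau M hn (Rg M hn i)) = MulAut.conj ((braidGen M ⟨0, hn⟩)⁻¹) (phi M hn (Rg M hn i))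
      simp only [MulAut.conj_apply, MulAut.conj_inv_apply, tau_Rg, map_mul, map_inv, phi_Rg, phi_Rg']
      group
    · show phi M hn (tau M hn (Rg' M hn i)) = MulAut.conj ((braidGen M ⟨0, hn⟩)⁻¹) (phi M hn (Rg' M hn i))
      simp only [MulAut.conj_apply, MulAut.conj_inv_apply, tau_Rg', map_mul, map_inv, phi_Rg, phi_Rg']
      group
  have h2 := DFunLike.congr_fun h b
  simpa [MulAut.conj_apply] using h2

lemma phi_surj_alt (x : BraidGroup M) (hx : braidSign M x = 1) :
    x ∈ (phi M hn).range := by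
  have hg0sq : braidGen M ⟨0, hn⟩ * braidGen M ⟨0, hn⟩ ∈ (phi M hn).range :=
    ⟨Rg M hn ⟨0, hn⟩, phi_Rg M hn _⟩
  have hconj : ∀ y ∈ (phi M hn).range,
      braidGen M ⟨0, hn⟩ * y * (braidGen M ⟨0, hn⟩)⁻¹ ∈ (phi M hn).range := by
    rintro y ⟨b, rfl⟩
    exact ⟨sigma M hn b, phi_sigma M hn b⟩
  have hconj' : ∀ y ∈ (phi M hn).range,
      (braidGen M ⟨0, hn⟩)⁻¹ * y * braidGen M ⟨0, hn⟩ ∈ (phi M hn).range := by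
    rintro y ⟨b, rfl⟩
    exact ⟨tau M hn b, phi_tau M hn b⟩
  set g0 := braidGen M ⟨0, hn⟩ with hg0
  let K : Subgroup (BraidGroup M) :=
    { carrier := {y | y ∈ (phi M hn).range ∨ g0⁻¹ * y ∈ (phi M hn).range}
      one_mem' := Or.inl (one_mem _)
      mul_mem' := by
        rintro a b (ha | ha) (hb | hb)
        · exact Or.inl (mul_mem ha hb)
        · refine Or.inr ?_
          have h : g0⁻¹ * (a * b) = (g0⁻¹ * a * g0) * (g0⁻¹ * b) := by group
          rw [h]
          exact mul_mem (hconj' a ha) hb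
        · refine Or.inr ?_
          have h : g0⁻¹ * (a * b) = (g0⁻¹ * a) * b := by group
          rw [h]
          exact mul_mem ha hb
        · refine Or.inl ?_
          have h : a * b = (g0 * (g0⁻¹ * a) * g0⁻¹) * ((g0 * g0) * (g0⁻¹ * b)) := by group
          rw [h]
          exact mul_mem (hconj _ ha) (mul_mem hg0sq hb)
      inv_mem' := by
        rintro a (ha | ha)
        · exact Or.inl (inv_mem ha)
        · refine Or.inr ?_
          have h : g0⁻¹ * a⁻¹ = (g0⁻¹ * (g0⁻¹ * a)⁻¹ * g0) * (g0 * g0)⁻¹ := by group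
          rw [h]
          exact mul_mem (hconj' _ (inv_mem ha)) (inv_mem hg0sq) }
  have hK : x ∈ K := by
    refine PresentedGroup.generated_by (braidRels M) K (fun j => Or.inr ?_) x
    have h : g0⁻¹ * braidGen M j = (g0 * g0)⁻¹ * (g0 * braidGen M j) := by group
    show g0⁻¹ * braidGen M j ∈ (phi M hn).range
    rw [h]
    exact mul_mem (inv_mem hg0sq) ⟨Rg M hn j, phi_Rg M hn j⟩
  rcases hK with h | h
  · exact h
  · exfalso
    rcases h with ⟨b, hb⟩
    have h1 := sign_phi M hn b
    rw [hb, map_mul, map_inv, hx, mul_one,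
      show braidSign M g0 = -1 from sign_gen M _] at h1
    exact absurd h1 (by decide)

end BourbakiAux

/-- The assignment `R_i ↦ g_0 g_i`, `R'_i ↦ g_i g_0⁻¹` extends to a group isomorphism
from the presented group `B` onto the alternating subgroup `𝓑⁺` of the braid group. -/
theorem bourbaki_presentation_of_alternating_braid_group
    (n : ℕ) (hn : 0 < n) (M : CoxeterMatrix (Fin n)) :
    ∃ e : PresentedGroup (bourbakiRels M hn) ≃* braidAlt M,
      (∀ i : Fin n,
        ((e (PresentedGroup.of (Sum.inl i)) : braidAlt M) : BraidGroup M) =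
          braidGen M ⟨0, hn⟩ * braidGen M i) ∧
      (∀ i : Fin n,
        ((e (PresentedGroup.of (Sum.inr i)) : braidAlt M) : BraidGroup M) =
          braidGen M i * (braidGen M ⟨0, hn⟩)⁻¹) := by
  have hmem : ∀ b, BourbakiAux.phi M hn b ∈ braidAlt M :=
    fun b => MonoidHom.mem_ker.mpr (BourbakiAux.sign_phi M hn b)
  let phi' : PresentedGroup (bourbakiRels M hn) →* braidAlt M :=
    (BourbakiAux.phi M hn).codRestrict _ hmem
  have hinj : Function.Injective phi' := fun a b hab =>
    BourbakiAux.phi_injective M hn (congrArg Subtype.val hab)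
  have hsurj : Function.Surjective phi' := by
    rintro ⟨x, hx⟩
    rcases BourbakiAux.phi_surj_alt M hn x (MonoidHom.mem_ker.mp hx) with ⟨b, hb⟩
    exact ⟨b, Subtype.ext hb⟩
  refine ⟨MulEquiv.ofBijective phi' ⟨hinj, hsurj⟩, fun i => ?_, fun i => ?_⟩
  · show ((phi' (PresentedGroup.of (Sum.inl i)) : braidAlt M) : BraidGroup M) = _
    exact BourbakiAux.phi_Rg M hn i
  · show ((phi' (PresentedGroup.of (Sum.inr i)) : braidAlt M) : BraidGroup M) = _
    exact BourbakiAux.phi_Rg' M hn i
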